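/- Let x ∈ l_{1,∞} be such that |x_n| ≤ α/(n+1) for all n ≥ 0 (for some α > 0) and Σ_{k=0}^n x_k ≤ 0 for all n ≥ 0. Then φ(x) ≤ 0 for every fully symmetric linear functional φ on l_{1,∞}. -/

import Mathlib

open scoped BigOperators

/-- The decreasing rearrangement of a real sequence:
`x^*_n = inf { t ≥ 0 : #{k : |x_k| > t} ≤ n }`. -/
noncomputable def dRear (x : ℕ → ℝ) (n : ℕ) : ℝ :=
  sInf {t : ℝ | 0 ≤ t ∧ {k : ℕ | t < |x k|}.encard ≤ n}

/-- Membership in the weak-`l₁` space `l_{1,∞}`. -/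
def MemL1w (x : ℕ → ℝ) : Prop :=
  BddAbove (Set.range fun n : ℕ => ((n : ℝ) + 1) * dRear x n)

/-- `φ` is a linear functional on `l_{1,∞}`. -/
def IsLinearL1w (φ : (ℕ → ℝ) → ℝ) : Prop :=
  (∀ x y : ℕ → ℝ, MemL1w x → MemL1w y → φ (x + y) = φ x + φ y) ∧
  (∀ (c : ℝ) (x : ℕ → ℝ), MemL1w x → φ (c • x) = c * φ x)

/-- `φ` is a fully symmetric functional on `l_{1,∞}`: `φ(x) ≤ φ(y)` whenever
`0 ≤ x, y ∈ l_{1,∞}` with `Σ_{k=0}^n x^*_k ≤ Σ_{k=0}^n y^*_k` for all `n`. -/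
def IsFullySymmetricL1w (φ : (ℕ → ℝ) → ℝ) : Prop :=
  ∀ x y : ℕ → ℝ, MemL1w x → MemL1w y → 0 ≤ x → 0 ≤ y →
    (∀ n : ℕ, ∑ k ∈ Finset.range (n + 1), dRear x k ≤
      ∑ k ∈ Finset.range (n + 1), dRear y k) →
    φ x ≤ φ y

/- ### Auxiliary sequences -/

noncomputable def hseq : ℕ → ℝ := fun k => 1 / ((k : ℝ) + 1)

noncomputable def eseq (j : ℕ) : ℕ → ℝ := fun k => if k = j then 1 else 0

noncomputable def chiseq (m : ℕ) : ℕ → ℝ := fun k => if k < m then 1 else 0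

noncomputable def Hsum (m : ℕ) : ℝ := ∑ k ∈ Finset.range m, 1 / ((k : ℝ) + 1)

lemma hseq_nonneg (k : ℕ) : 0 ≤ hseq k := by unfold hseq; positivity

lemma hseq_antitone : Antitone hseq := by
  intro a b hab
  apply one_div_le_one_div_of_le (by positivity)
  have : (a : ℝ) ≤ b := by exact_mod_cast hab
  linarith

lemma eseq_nonneg (j k : ℕ) : 0 ≤ eseq j k := by
  unfold eseq; split <;> norm_num

lemma chiseq_nonneg (m k : ℕ) : 0 ≤ chiseq m k := by
  unfold chiseq; split <;> norm_num

lemma chiseq_antitone (m : ℕ) : Antitone (chiseq m) := by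
  intro a b hab
  unfold chiseq
  by_cases hb : b < m
  · rw [if_pos hb, if_pos (lt_of_le_of_lt hab hb)]
  · rw [if_neg hb]
    split <;> norm_num

/- ### Basic facts about `dRear` -/

lemma dRear_bddBelow (x : ℕ → ℝ) (n : ℕ) :
    BddBelow {t : ℝ | 0 ≤ t ∧ {k : ℕ | t < |x k|}.encard ≤ n} :=
  ⟨0, fun _ ht => ht.1⟩

lemma dRear_nonneg (x : ℕ → ℝ) (n : ℕ) : 0 ≤ dRear x n := by
  apply Real.sInf_nonneg
  exact fun _ ht => ht.1

lemma dRear_le {x : ℕ → ℝ} {n : ℕ} {t : ℝ} (ht : 0 ≤ t)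
    (hc : {k : ℕ | t < |x k|}.encard ≤ n) : dRear x n ≤ t := by
  simp only [dRear]
  exact csInf_le (dRear_bddBelow x n) ⟨ht, hc⟩

lemma encard_le_of_subset_range {s : Set ℕ} {n : ℕ} (h : s ⊆ {k | k < n}) :
    s.encard ≤ n := by
  calc s.encard ≤ ({k | k < n} : Set ℕ).encard := Set.encard_mono h
  _ = n := by
      rw [show {k : ℕ | k < n} = ↑(Finset.range n) from by ext k; simp,
        Set.encard_coe_eq_coe_finsetCard, Finset.card_range]

lemma antitone_mem_dRearSet {g : ℕ → ℝ} (hg : Antitone g) (h0 : ∀ k, 0 ≤ g k) (n : ℕ) :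
    {k : ℕ | g n < |g k|}.encard ≤ n := by
  apply encard_le_of_subset_range
  intro k hk
  simp only [Set.mem_setOf_eq, abs_of_nonneg (h0 k)] at hk
  simp only [Set.mem_setOf_eq]
  by_contra hkn
  push_neg at hkn
  exact absurd (hg hkn) (not_le.mpr hk)

lemma dRear_of_antitone {g : ℕ → ℝ} (hg : Antitone g) (h0 : ∀ k, 0 ≤ g k) (n : ℕ) :
    dRear g n = g n := by
  refine le_antisymm (dRear_le (h0 n) (antitone_mem_dRearSet hg h0 n)) ?_
  simp only [dRear]
  refine le_csInf ⟨g n, h0 n, antitone_mem_dRearSet hg h0 n⟩ ?_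
  rintro t ⟨ht0, htc⟩
  by_contra hlt
  push_neg at hlt
  have hsub : ({k : ℕ | k < n + 1} : Set ℕ) ⊆ {k : ℕ | t < |g k|} := by
    intro k hk
    have h1 : g n ≤ g k := hg (Nat.lt_succ_iff.mp hk)
    simp only [Set.mem_setOf_eq, abs_of_nonneg (h0 k)]
    linarith
  have h2 : ((n + 1 : ℕ) : ℕ∞) ≤ {k : ℕ | t < |g k|}.encard := by
    rw [show ({k : ℕ | k < n + 1} : Set ℕ) = ↑(Finset.range (n + 1)) from by ext k; simp]
      at hsub
    calc ((n + 1 : ℕ) : ℕ∞) = (↑(Finset.range (n + 1)) : Set ℕ).encard := by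
          rw [Set.encard_coe_eq_coe_finsetCard, Finset.card_range]
    _ ≤ _ := Set.encard_mono hsub
  have h3 : ((n + 1 : ℕ) : ℕ∞) ≤ (n : ℕ∞) := le_trans h2 htc
  have h4 : n + 1 ≤ n := by exact_mod_cast h3
  omega

lemma dRear_le_div {x : ℕ → ℝ} {C : ℝ} (hC : 0 < C)
    (hb : ∀ k, |x k| ≤ C / ((k : ℝ) + 1)) (n : ℕ) : dRear x n ≤ C / ((n : ℝ) + 1) := by
  refine dRear_le (by positivity) (encard_le_of_subset_range ?_)
  intro k hk
  simp only [Set.mem_setOf_eq] at hk ⊢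
  have h3 : C / ((n : ℝ) + 1) < C / ((k : ℝ) + 1) := lt_of_lt_of_le hk (hb k)
  have h4 : (k : ℝ) + 1 < (n : ℝ) + 1 :=
    (div_lt_div_iff_of_pos_left hC (by positivity) (by positivity)).mp h3
  have h5 : (k : ℝ) < (n : ℝ) := by linarith
  exact_mod_cast h5

lemma memL1w_of_bound {x : ℕ → ℝ} {C : ℝ} (hC : 0 < C)
    (hb : ∀ k, |x k| ≤ C / ((k : ℝ) + 1)) : MemL1w x := by
  refine ⟨C, ?_⟩
  rintro v ⟨n, rfl⟩
  have h1 := dRear_le_div hC hb n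
  have h2 : (0 : ℝ) < (n : ℝ) + 1 := by positivity
  calc ((n : ℝ) + 1) * dRear x n ≤ ((n : ℝ) + 1) * (C / ((n : ℝ) + 1)) :=
        mul_le_mul_of_nonneg_left h1 h2.le
  _ = C := by field_simp

/- ### Top sets -/

lemma sum_dRear_le_topset {y : ℕ → ℝ} (hy : ∀ k, 0 ≤ y k) :
    ∀ (m : ℕ) (S : Finset ℕ), S.card = m → (∀ j ∉ S, ∀ i ∈ S, y j ≤ y i) →
    ∑ k ∈ Finset.range m, dRear y k ≤ ∑ j ∈ S, y j := by
  intro m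
  induction m with
  | zero => simp
  | succ m ih =>
    intro S hcard htop
    have hne : S.Nonempty := Finset.card_pos.mp (by omega)
    obtain ⟨i₀, hi₀S, hi₀min⟩ := S.exists_min_image y hne
    have hS' : (S.erase i₀).card = m := by
      rw [Finset.card_erase_of_mem hi₀S, hcard]
      omega
    have h1 : ∑ k ∈ Finset.range m, dRear y k ≤ ∑ j ∈ S.erase i₀, y j := by
      apply ih _ hS'
      intro j hj i hi
      by_cases hjS : j ∈ S
      · have hj0 : j = i₀ := by
          by_contra hne'
          exact hj (Finset.mem_erase.mpr ⟨hne', hjS⟩)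
        rw [hj0]
        exact hi₀min i (Finset.mem_of_mem_erase hi)
      · exact htop j hjS i (Finset.mem_of_mem_erase hi)
    have h2 : dRear y m ≤ y i₀ := by
      refine dRear_le (hy i₀) ?_
      have hsub : {k : ℕ | y i₀ < |y k|} ⊆ ↑(S.erase i₀) := by
        intro k hk
        simp only [Set.mem_setOf_eq, abs_of_nonneg (hy k)] at hk
        have hkS : k ∈ S := by
          by_contra hknS
          exact absurd (htop k hknS i₀ hi₀S) (not_le.mpr hk)
        refine Finset.mem_coe.mpr (Finset.mem_erase.mpr ⟨?_, hkS⟩)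
        intro he
        rw [he] at hk
        exact lt_irrefl _ hk
      calc {k : ℕ | y i₀ < |y k|}.encard ≤ (↑(S.erase i₀) : Set ℕ).encard :=
            Set.encard_mono hsub
      _ = (m : ℕ∞) := by rw [Set.encard_coe_eq_coe_finsetCard, hS']
    calc ∑ k ∈ Finset.range (m + 1), dRear y k
        = ∑ k ∈ Finset.range m, dRear y k + dRear y m := Finset.sum_range_succ _ _
    _ ≤ ∑ j ∈ S.erase i₀, y j + y i₀ := add_le_add h1 h2
    _ = ∑ j ∈ S, y j := Finset.sum_erase_add _ _ hi₀S

/- ### Main combinatorial estimate -/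

lemma sum_dRear_le_main {y : ℕ → ℝ} {α : ℝ} (hα : 0 < α) (hy0 : ∀ k, 0 ≤ y k)
    (hub : ∀ k, y k ≤ 2 * α / ((k : ℝ) + 1))
    (hps : ∀ n, ∑ k ∈ Finset.range (n + 1), y k ≤ α * Hsum (n + 1)) (n : ℕ) :
    ∑ k ∈ Finset.range (n + 1), dRear y k ≤ α * Hsum (n + 1) + 2 * α := by
  set t' : ℝ := 2 * α / ((n : ℝ) + 2) with ht'
  have ht'pos : 0 < t' := by positivity
  set S : Finset ℕ := (Finset.range (n + 1)).filter (fun k => t' < y k) with hSdef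
  have hmem : ∀ k, k ∈ S ↔ t' < y k := by
    intro k
    simp only [hSdef, Finset.mem_filter, Finset.mem_range]
    constructor
    · exact fun h => h.2
    · intro h
      refine ⟨?_, h⟩
      have h1 : 2 * α / ((n : ℝ) + 2) < 2 * α / ((k : ℝ) + 1) := lt_of_lt_of_le h (hub k)
      have h2 : (k : ℝ) + 1 < (n : ℝ) + 2 :=
        (div_lt_div_iff_of_pos_left (by positivity) (by positivity) (by positivity)).mp h1
      have h3 : (k : ℝ) < ((n + 1 : ℕ) : ℝ) := by push_cast; linarith
      exact_mod_cast h3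
  have hsetS : {k : ℕ | t' < |y k|} = ↑S := by
    ext k
    rw [Set.mem_setOf_eq, abs_of_nonneg (hy0 k), Finset.mem_coe, hmem k]
  have hcard : S.card ≤ n + 1 := by
    calc S.card ≤ (Finset.range (n + 1)).card := Finset.card_filter_le _ _
    _ = n + 1 := Finset.card_range _
  have htop : ∀ j ∉ S, ∀ i ∈ S, y j ≤ y i := by
    intro j hj i hi
    have hji : ¬ t' < y j := fun h => hj ((hmem j).mpr h)
    have hii := (hmem i).mp hi
    linarith [not_lt.mp hji]
  have h1 : ∑ k ∈ Finset.range S.card, dRear y k ≤ ∑ j ∈ S, y j :=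
    sum_dRear_le_topset hy0 S.card S rfl htop
  have h2 : ∑ j ∈ S, y j ≤ α * Hsum (n + 1) := by
    refine le_trans (Finset.sum_le_sum_of_subset_of_nonneg (Finset.filter_subset _ _) ?_)
      (hps n)
    exact fun i _ _ => hy0 i
  have h3 : ∀ k ∈ Finset.Ico S.card (n + 1), dRear y k ≤ t' := by
    intro k hk
    have hkm : S.card ≤ k := (Finset.mem_Ico.mp hk).1
    refine dRear_le ht'pos.le ?_
    rw [hsetS, Set.encard_coe_eq_coe_finsetCard]
    exact_mod_cast hkm
  have hsplit : ∑ k ∈ Finset.range (n + 1), dRear y k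
      = ∑ k ∈ Finset.range S.card, dRear y k + ∑ k ∈ Finset.Ico S.card (n + 1), dRear y k := by
    rw [Finset.range_eq_Ico, Finset.range_eq_Ico]
    exact (Finset.sum_Ico_consecutive _ (Nat.zero_le S.card) hcard).symm
  have h4 : ∑ k ∈ Finset.Ico S.card (n + 1), dRear y k ≤ ((n + 1 - S.card : ℕ) : ℝ) * t' := by
    calc ∑ k ∈ Finset.Ico S.card (n + 1), dRear y k ≤ ∑ _k ∈ Finset.Ico S.card (n + 1), t' :=
          Finset.sum_le_sum h3
    _ = ((n + 1 - S.card : ℕ) : ℝ) * t' := by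
        rw [Finset.sum_const, Nat.card_Ico, nsmul_eq_mul]
  have h5 : ((n + 1 - S.card : ℕ) : ℝ) * t' ≤ 2 * α := by
    have hle : ((n + 1 - S.card : ℕ) : ℝ) ≤ (n : ℝ) + 2 := by
      have hh : n + 1 - S.card ≤ n + 2 := by omega
      calc ((n + 1 - S.card : ℕ) : ℝ) ≤ ((n + 2 : ℕ) : ℝ) := by exact_mod_cast hh
      _ = (n : ℝ) + 2 := by push_cast; ring
    calc ((n + 1 - S.card : ℕ) : ℝ) * t' ≤ ((n : ℝ) + 2) * t' :=
          mul_le_mul_of_nonneg_right hle ht'pos.le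
    _ = 2 * α := by
        rw [ht']
        field_simp
  rw [hsplit]
  linarith

/- ### Facts about `Hsum` -/

lemma hsum_zero : Hsum 0 = 0 := by simp [Hsum]

lemma hsum_one : Hsum 1 = 1 := by simp [Hsum]

lemma hsum_mono : Monotone Hsum := by
  intro a b hab
  apply Finset.sum_le_sum_of_subset_of_nonneg (Finset.range_subset_range.mpr hab)
  intro i _ _
  positivity

lemma hsum_pos {m : ℕ} (hm : 1 ≤ m) : 0 < Hsum m := by
  have h1 : (0:ℝ) < Hsum 1 := by rw [hsum_one]; norm_num
  exact lt_of_lt_of_le h1 (hsum_mono hm)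

lemma one_le_hsum {m : ℕ} (hm : 1 ≤ m) : 1 ≤ Hsum m := by
  calc (1 : ℝ) = Hsum 1 := hsum_one.symm
  _ ≤ Hsum m := hsum_mono hm

lemma hsum_cross {a b : ℕ} (ha : 1 ≤ a) (hab : a ≤ b) :
    (a : ℝ) * Hsum b ≤ (b : ℝ) * Hsum a := by
  have h1 : Hsum b = Hsum a + ∑ k ∈ Finset.Ico a b, 1 / ((k : ℝ) + 1) := by
    rw [Hsum, Hsum, Finset.range_eq_Ico, Finset.range_eq_Ico,
      ← Finset.sum_Ico_consecutive (fun k => 1 / ((k : ℝ) + 1)) (Nat.zero_le a) hab]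
  have h2 : ∑ k ∈ Finset.Ico a b, 1 / ((k : ℝ) + 1)
      ≤ ((b - a : ℕ) : ℝ) * (1 / ((a : ℝ) + 1)) := by
    calc ∑ k ∈ Finset.Ico a b, 1 / ((k : ℝ) + 1)
        ≤ ∑ _k ∈ Finset.Ico a b, 1 / ((a : ℝ) + 1) := by
          apply Finset.sum_le_sum
          intro k hk
          have hak : a ≤ k := (Finset.mem_Ico.mp hk).1
          apply one_div_le_one_div_of_le (by positivity)
          have : (a : ℝ) ≤ k := by exact_mod_cast hak
          linarith
    _ = ((b - a : ℕ) : ℝ) * (1 / ((a : ℝ) + 1)) := by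
        rw [Finset.sum_const, Nat.card_Ico, nsmul_eq_mul]
  have hba : ((b - a : ℕ) : ℝ) = (b : ℝ) - a := by
    have : ((b - a : ℕ) : ℝ) = ((b : ℕ) : ℝ) - ((a : ℕ) : ℝ) := by
      rw [Nat.cast_sub hab]
    exact this
  have ha' : (1 : ℝ) ≤ a := by exact_mod_cast ha
  have hab' : (a : ℝ) ≤ b := by exact_mod_cast hab
  have hHa : 1 ≤ Hsum a := one_le_hsum ha
  have key : (a : ℝ) * (((b : ℝ) - a) * (1 / ((a : ℝ) + 1))) ≤ (b : ℝ) - a := by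
    rw [mul_comm ((b : ℝ) - a), ← mul_assoc]
    have h6 : (a : ℝ) * (1 / ((a : ℝ) + 1)) ≤ 1 := by
      rw [mul_one_div, div_le_one (by positivity)]
      linarith
    nlinarith
  have h7 : (a : ℝ) * Hsum b ≤ (a : ℝ) * Hsum a + ((b : ℝ) - a) := by
    rw [h1, mul_add]
    have := mul_le_mul_of_nonneg_left h2 (by positivity : (0:ℝ) ≤ (a : ℝ))
    rw [hba] at this
    linarith [key, this]
  calc (a : ℝ) * Hsum b ≤ (a : ℝ) * Hsum a + ((b : ℝ) - a) := h7
  _ ≤ (a : ℝ) * Hsum a + ((b : ℝ) - a) * Hsum a := by nlinarith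
  _ = (b : ℝ) * Hsum a := by ring

/- ### `dRear` of the special sequences -/

lemma dRear_eseq (j n : ℕ) : dRear (eseq j) n = if n = 0 then 1 else 0 := by
  have habs : ∀ k, |eseq j k| = eseq j k := fun k => abs_of_nonneg (eseq_nonneg j k)
  rcases Nat.eq_zero_or_pos n with hn | hn
  · subst hn
    rw [if_pos rfl]
    refine le_antisymm (dRear_le zero_le_one ?_) ?_
    · have he : {k : ℕ | (1 : ℝ) < |eseq j k|} = ∅ := by
        ext k
        simp only [Set.mem_setOf_eq, habs k, Set.mem_empty_iff_false, iff_false, not_lt]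
        unfold eseq; split <;> norm_num
      rw [he, Set.encard_empty]
      exact_mod_cast Nat.zero_le 0
    · simp only [dRear]
      refine le_csInf ⟨1, zero_le_one, ?_⟩ ?_
      · have he : {k : ℕ | (1 : ℝ) < |eseq j k|} = ∅ := by
          ext k
          simp only [Set.mem_setOf_eq, habs k, Set.mem_empty_iff_false, iff_false, not_lt]
          unfold eseq; split <;> norm_num
        rw [he, Set.encard_empty]
        exact_mod_cast Nat.zero_le 0
      · rintro t ⟨ht0, htc⟩
        by_contra hlt
        push_neg at hlt
        have hmem : ({j} : Set ℕ) ⊆ {k : ℕ | t < |eseq j k|} := by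
          intro k hk
          rw [Set.mem_singleton_iff] at hk
          subst hk
          simp only [Set.mem_setOf_eq, habs k]
          unfold eseq
          rw [if_pos rfl]
          exact hlt
        have h1 : (1 : ℕ∞) ≤ {k : ℕ | t < |eseq j k|}.encard := by
          calc (1 : ℕ∞) = ({j} : Set ℕ).encard := (Set.encard_singleton j).symm
          _ ≤ _ := Set.encard_mono hmem
        have h2 : (1 : ℕ∞) ≤ ((0 : ℕ) : ℕ∞) := le_trans h1 htc
        simp at h2
  · rw [if_neg (by omega)]
    refine le_antisymm (dRear_le le_rfl ?_) (dRear_nonneg _ _)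
    have hsub : {k : ℕ | (0 : ℝ) < |eseq j k|} ⊆ ({j} : Set ℕ) := by
      intro k hk
      simp only [Set.mem_setOf_eq, habs k] at hk
      rw [Set.mem_singleton_iff]
      by_contra hne
      unfold eseq at hk
      rw [if_neg hne] at hk
      exact lt_irrefl _ hk
    calc {k : ℕ | (0 : ℝ) < |eseq j k|}.encard ≤ ({j} : Set ℕ).encard := Set.encard_mono hsub
    _ = 1 := Set.encard_singleton j
    _ ≤ (n : ℕ∞) := by exact_mod_cast hn

lemma sum_dRear_eseq (j n : ℕ) : ∑ k ∈ Finset.range (n + 1), dRear (eseq j) k = 1 := by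
  have : ∀ k, dRear (eseq j) k = if k = 0 then 1 else 0 := dRear_eseq j
  simp only [this]
  rw [Finset.sum_ite_eq' (Finset.range (n + 1)) 0 (fun _ => (1 : ℝ))]
  rw [if_pos (Finset.mem_range.mpr (by omega))]

lemma dRear_chiseq (m n : ℕ) : dRear (chiseq m) n = chiseq m n :=
  dRear_of_antitone (chiseq_antitone m) (chiseq_nonneg m) n

lemma sum_chiseq (m n : ℕ) :
    ∑ k ∈ Finset.range (n + 1), chiseq m k = ((min (n + 1) m : ℕ) : ℝ) := by
  have h1 : (Finset.range (n + 1)).filter (fun k => k < m) = Finset.range (min (n + 1) m) := by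
    ext k
    simp only [Finset.mem_filter, Finset.mem_range]
    omega
  calc ∑ k ∈ Finset.range (n + 1), chiseq m k
      = ∑ k ∈ Finset.range (n + 1), (if k < m then (1:ℝ) else 0) := rfl
    _ = ∑ k ∈ (Finset.range (n + 1)).filter (fun k => k < m), (1:ℝ) :=
        (Finset.sum_filter _ _).symm
    _ = _ := by rw [h1, Finset.sum_const, Finset.card_range, nsmul_eq_mul, mul_one]

/- ### Memberships -/

lemma memL1w_hseq : MemL1w hseq :=
  memL1w_of_bound one_pos (fun k => by
    rw [abs_of_nonneg (hseq_nonneg k)]; unfold hseq; norm_num)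

lemma memL1w_smul_hseq {c : ℝ} (hc : 0 < c) : MemL1w (c • hseq) :=
  memL1w_of_bound hc (fun k => by
    simp only [Pi.smul_apply, smul_eq_mul]
    rw [abs_of_nonneg (mul_nonneg hc.le (hseq_nonneg k))]
    unfold hseq
    rw [mul_one_div])

lemma memL1w_eseq (j : ℕ) : MemL1w (eseq j) := by
  refine memL1w_of_bound (by positivity : (0:ℝ) < (j : ℝ) + 1) (fun k => ?_)
  rw [abs_of_nonneg (eseq_nonneg j k)]
  unfold eseq
  split
  · rename_i hkj
    subst hkj
    rw [le_div_iff₀ (by positivity)]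
    norm_num
  · positivity

lemma memL1w_chiseq (m : ℕ) : MemL1w (chiseq m) := by
  refine memL1w_of_bound (by positivity : (0:ℝ) < (m : ℝ) + 1) (fun k => ?_)
  rw [abs_of_nonneg (chiseq_nonneg m k)]
  unfold chiseq
  split
  · rename_i hkm
    rw [le_div_iff₀ (by positivity), one_mul]
    have : (k : ℝ) + 1 ≤ (m : ℝ) := by exact_mod_cast hkm
    linarith
  · positivity

/- ### `φ (eseq 0) ≤ 0` -/

lemma phi_eseq_eq {φ : (ℕ → ℝ) → ℝ} (hfs : IsFullySymmetricL1w φ) (j : ℕ) :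
    φ (eseq j) = φ (eseq 0) := by
  have hmaj : ∀ (a b : ℕ), ∀ n : ℕ, ∑ k ∈ Finset.range (n + 1), dRear (eseq a) k ≤
      ∑ k ∈ Finset.range (n + 1), dRear (eseq b) k := by
    intro a b n
    rw [sum_dRear_eseq, sum_dRear_eseq]
  have hpos : ∀ a : ℕ, (0 : ℕ → ℝ) ≤ eseq a := fun a k => eseq_nonneg a k
  exact le_antisymm
    (hfs _ _ (memL1w_eseq j) (memL1w_eseq 0) (hpos j) (hpos 0) (hmaj j 0))
    (hfs _ _ (memL1w_eseq 0) (memL1w_eseq j) (hpos 0) (hpos j) (hmaj 0 j))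

lemma chiseq_succ (m : ℕ) : chiseq (m + 1) = chiseq m + eseq m := by
  funext k
  simp only [chiseq, eseq, Pi.add_apply]
  by_cases h1 : k < m
  · rw [if_pos (by omega), if_pos h1, if_neg (by omega)]; ring
  · by_cases h2 : k = m
    · rw [if_pos (by omega), if_neg h1, if_pos h2]; ring
    · rw [if_neg (by omega), if_neg h1, if_neg h2]; ring

lemma phi_zero_fun {φ : (ℕ → ℝ) → ℝ} (hlin : IsLinearL1w φ) : φ (chiseq 0) = 0 := by
  have h1 : chiseq 0 = (0 : ℝ) • hseq := by
    funext k
    simp [chiseq, hseq]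
  rw [h1, hlin.2 0 hseq memL1w_hseq]
  ring

lemma phi_chiseq {φ : (ℕ → ℝ) → ℝ} (hlin : IsLinearL1w φ) (hfs : IsFullySymmetricL1w φ)
    (m : ℕ) : φ (chiseq m) = (m : ℝ) * φ (eseq 0) := by
  induction m with
  | zero => rw [phi_zero_fun hlin]; norm_num
  | succ j ih =>
    rw [chiseq_succ, hlin.1 _ _ (memL1w_chiseq j) (memL1w_eseq j), ih, phi_eseq_eq hfs j]
    push_cast
    ring

lemma phi_e0_nonpos {φ : (ℕ → ℝ) → ℝ} (hlin : IsLinearL1w φ)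
    (hfs : IsFullySymmetricL1w φ) : φ (eseq 0) ≤ 0 := by
  have key : ∀ m : ℕ, 1 ≤ m → φ (eseq 0) ≤ φ hseq / Hsum m := by
    intro m hm
    have hHm : 0 < Hsum m := hsum_pos hm
    have hm0 : (0 : ℝ) < m := by exact_mod_cast hm
    set K : ℝ := (m : ℝ) / Hsum m with hK
    have hK0 : 0 < K := div_pos hm0 hHm
    -- the comparison sequence
    have hKh_anti : Antitone (K • hseq) := by
      intro a b hab
      simp only [Pi.smul_apply, smul_eq_mul]
      exact mul_le_mul_of_nonneg_left (hseq_antitone hab) hK0.le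
    have hKh_nonneg : ∀ k, 0 ≤ (K • hseq) k := by
      intro k
      simp only [Pi.smul_apply, smul_eq_mul]
      exact mul_nonneg hK0.le (hseq_nonneg k)
    have hmaj : ∀ n : ℕ, ∑ k ∈ Finset.range (n + 1), dRear (chiseq m) k ≤
        ∑ k ∈ Finset.range (n + 1), dRear (K • hseq) k := by
      intro n
      have hL : ∑ k ∈ Finset.range (n + 1), dRear (chiseq m) k = ((min (n + 1) m : ℕ) : ℝ) := by
        simp only [dRear_chiseq]
        exact sum_chiseq m n
      have hR : ∑ k ∈ Finset.range (n + 1), dRear (K • hseq) k = K * Hsum (n + 1) := by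
        have : ∀ k, dRear (K • hseq) k = K * hseq k := by
          intro k
          rw [dRear_of_antitone hKh_anti hKh_nonneg k]
          simp [smul_eq_mul]
        simp only [this]
        rw [← Finset.mul_sum]
        rfl
      rw [hL, hR]
      rw [hK, div_mul_eq_mul_div, le_div_iff₀ hHm]
      rcases le_or_gt (n + 1) m with hle | hlt
      · rw [min_eq_left hle]
        exact hsum_cross (by omega) hle
      · rw [min_eq_right hlt.le]
        have := hsum_mono (show m ≤ n + 1 by omega)
        calc ((m : ℕ) : ℝ) * Hsum m ≤ ((m : ℕ) : ℝ) * Hsum (n + 1) :=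
              mul_le_mul_of_nonneg_left this (by positivity)
        _ = (m : ℝ) * Hsum (n + 1) := by norm_cast
    have hchi_pos : (0 : ℕ → ℝ) ≤ chiseq m := fun k => chiseq_nonneg m k
    have hKh_pos : (0 : ℕ → ℝ) ≤ K • hseq := fun k => hKh_nonneg k
    have h1 : φ (chiseq m) ≤ φ (K • hseq) :=
      hfs _ _ (memL1w_chiseq m) (memL1w_smul_hseq hK0) hchi_pos hKh_pos hmaj
    rw [phi_chiseq hlin hfs m, hlin.2 K hseq memL1w_hseq] at h1
    -- m * φ(e0) ≤ (m / Hm) * φ(hseq)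
    have h2 : (m : ℝ) * φ (eseq 0) ≤ (m : ℝ) * (φ hseq / Hsum m) := by
      calc (m : ℝ) * φ (eseq 0) ≤ K * φ hseq := h1
      _ = (m : ℝ) * (φ hseq / Hsum m) := by rw [hK]; ring
    exact le_of_mul_le_mul_left h2 hm0
  have hH : Filter.Tendsto (fun m => Hsum m) Filter.atTop Filter.atTop := by
    have := Real.tendsto_sum_range_one_div_nat_succ_atTop
    simpa [Hsum] using this
  have hlim : Filter.Tendsto (fun m => φ hseq / Hsum m) Filter.atTop (nhds 0) :=
    Filter.Tendsto.div_atTop tendsto_const_nhds hH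
  exact ge_of_tendsto hlim (Filter.eventually_atTop.mpr ⟨1, fun m hm => key m hm⟩)

/- ### The main theorem -/

/-- If `x ∈ l_{1,∞}` satisfies `|x_n| ≤ α/(n+1)` for all `n` (for some `α > 0`) and
`Σ_{k=0}^n x_k ≤ 0` for all `n`, then `φ(x) ≤ 0` for every fully symmetric linear
functional `φ` on `l_{1,∞}`. -/
theorem stmt_10 (x : ℕ → ℝ) (α : ℝ) (hα : 0 < α) (hx : MemL1w x)
    (hb : ∀ n : ℕ, |x n| ≤ α / ((n : ℝ) + 1))
    (hs : ∀ n : ℕ, ∑ k ∈ Finset.range (n + 1), x k ≤ 0)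
    (φ : (ℕ → ℝ) → ℝ) (hlin : IsLinearL1w φ) (hfs : IsFullySymmetricL1w φ) :
    φ x ≤ 0 := by
  set y : ℕ → ℝ := x + α • hseq with hy
  set g : ℕ → ℝ := α • hseq + (2 * α) • eseq 0 with hg
  have hyk : ∀ k, y k = x k + α * (1 / ((k : ℝ) + 1)) := by
    intro k
    simp [hy, hseq, Pi.add_apply, Pi.smul_apply, smul_eq_mul]
  have hy0 : ∀ k, 0 ≤ y k := by
    intro k
    have h1 := (abs_le.mp (hb k)).1
    rw [hyk k, mul_one_div]
    linarith
  have hyub : ∀ k, y k ≤ 2 * α / ((k : ℝ) + 1) := by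
    intro k
    have h1 := (abs_le.mp (hb k)).2
    rw [hyk k, mul_one_div]
    have : 2 * α / ((k : ℝ) + 1) = α / ((k : ℝ) + 1) + α / ((k : ℝ) + 1) := by ring
    linarith
  have hyps : ∀ n, ∑ k ∈ Finset.range (n + 1), y k ≤ α * Hsum (n + 1) := by
    intro n
    have h1 : ∑ k ∈ Finset.range (n + 1), y k
        = ∑ k ∈ Finset.range (n + 1), x k + α * Hsum (n + 1) := by
      simp only [hyk, mul_one_div]
      rw [Finset.sum_add_distrib, Hsum, Finset.mul_sum]
      congr 1
      apply Finset.sum_congr rfl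
      intro k _
      rw [mul_one_div]
    rw [h1]
    linarith [hs n]
  -- g is antitone and nonneg
  have hgk : ∀ k, g k = α * (1 / ((k : ℝ) + 1)) + (if k = 0 then 2 * α else 0) := by
    intro k
    simp only [hg, Pi.add_apply, Pi.smul_apply, smul_eq_mul, hseq, eseq]
    split <;> ring
  have hg0 : ∀ k, 0 ≤ g k := by
    intro k
    rw [hgk k]
    split <;> positivity
  have hganti : Antitone g := by
    intro a b hab
    rw [hgk a, hgk b]
    have hmono : α * (1 / ((b : ℝ) + 1)) ≤ α * (1 / ((a : ℝ) + 1)) :=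
      mul_le_mul_of_nonneg_left (hseq_antitone hab) hα.le
    by_cases hb0 : b = 0
    · have ha0 : a = 0 := by omega
      subst ha0
      subst hb0
      exact le_rfl
    · rw [if_neg hb0, add_zero]
      have hite : (0:ℝ) ≤ if a = 0 then 2 * α else 0 := by split <;> positivity
      linarith
  -- ∑ g over range (n+1)
  have hgsum : ∀ n, ∑ k ∈ Finset.range (n + 1), g k = α * Hsum (n + 1) + 2 * α := by
    intro n
    simp only [hgk]
    rw [Finset.sum_add_distrib]
    congr 1
    · rw [Hsum, Finset.mul_sum]
    · rw [Finset.sum_ite_eq' (Finset.range (n + 1)) 0 (fun _ => 2 * α)]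
      rw [if_pos (Finset.mem_range.mpr (by omega))]
  -- memberships
  have memah : MemL1w (α • hseq) := memL1w_smul_hseq hα
  have mem2ae : MemL1w ((2 * α) • eseq 0) := by
    refine memL1w_of_bound (by positivity : (0:ℝ) < 2 * α) (fun k => ?_)
    simp only [Pi.smul_apply, smul_eq_mul]
    have h0 : (0:ℝ) ≤ 2 * α * eseq 0 k := mul_nonneg (by positivity) (eseq_nonneg 0 k)
    rw [abs_of_nonneg h0]
    unfold eseq
    split
    · rename_i hk
      subst hk
      norm_num
    · simp only [mul_zero]
      positivity
  have memy : MemL1w y := by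
    refine memL1w_of_bound (by positivity : (0:ℝ) < 2 * α) (fun k => ?_)
    rw [abs_of_nonneg (hy0 k)]
    exact hyub k
  have memg : MemL1w g := by
    refine memL1w_of_bound (by positivity : (0:ℝ) < 3 * α) (fun k => ?_)
    rw [abs_of_nonneg (hg0 k), hgk k]
    by_cases hk : k = 0
    · subst hk
      rw [if_pos rfl]
      norm_num
      linarith
    · rw [if_neg hk, add_zero, mul_one_div]
      gcongr
      linarith
  -- majorization
  have hmaj : ∀ n, ∑ k ∈ Finset.range (n + 1), dRear y k ≤
      ∑ k ∈ Finset.range (n + 1), dRear g k := by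
    intro n
    have h1 := sum_dRear_le_main hα hy0 hyub hyps n
    have h2 : ∑ k ∈ Finset.range (n + 1), dRear g k = α * Hsum (n + 1) + 2 * α := by
      have hdg : ∀ k, dRear g k = g k := dRear_of_antitone hganti hg0
      simp only [hdg]
      exact hgsum n
    rw [h2]
    exact h1
  have hstep := hfs y g memy memg (fun k => hy0 k) (fun k => hg0 k) hmaj
  have e1 : φ y = φ x + α * φ hseq := by
    rw [hy, hlin.1 x (α • hseq) hx memah, hlin.2 α hseq memL1w_hseq]
  have e2 : φ g = α * φ hseq + (2 * α) * φ (eseq 0) := by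
    rw [hg, hlin.1 _ _ memah mem2ae, hlin.2 α hseq memL1w_hseq,
      hlin.2 (2 * α) (eseq 0) (memL1w_eseq 0)]
  have e3 : φ (eseq 0) ≤ 0 := phi_e0_nonpos hlin hfs
  rw [e1, e2] at hstep
  nlinarith [hstep, e3, hα]
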